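/- Let β > 0 and let I be a finite set of size n consisting of positive reals that are each an integer multiple of β. Let 1 ≤ τ ≤ n, let T consist of the τ largest elements of I, and let B := I \ T. If |𝒮(B)| > n·max(I)/(β·2^τ) + 1, then there exist nonempty disjoint subsets X, Y ⊆ I with Σ(X) = Σ(Y) and (X ∪ Y) ∩ T ≠ ∅. -/

import Mathlib

open Finset

/-- Auxiliary: from two subsets of `I` with equal sums, one containing an element of `T`
not in the other, produce the desired disjoint nonempty pair. -/
lemma aux_pair (I T : Finset ℝ) (hpos : ∀ x ∈ I, 0 < x)
    (X₀ Y₀ : Finset ℝ) (hX₀ : X₀ ⊆ I) (hY₀ : Y₀ ⊆ I)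
    (hsum : X₀.sum id = Y₀.sum id) (t : ℝ) (ht : t ∈ T) (htX : t ∈ X₀) (htY : t ∉ Y₀) :
    ∃ X Y : Finset ℝ, X ⊆ I ∧ Y ⊆ I ∧ Disjoint X Y ∧ X.Nonempty ∧ Y.Nonempty ∧
      X.sum id = Y.sum id ∧ ((X ∪ Y) ∩ T).Nonempty := by
  classical
  refine ⟨X₀ \ Y₀, Y₀ \ X₀, (sdiff_subset).trans hX₀, (sdiff_subset).trans hY₀,
    disjoint_sdiff_sdiff, ⟨t, mem_sdiff.2 ⟨htX, htY⟩⟩, ?_, ?_, ?_⟩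
  · -- Y₀ \ X₀ nonempty
    rw [nonempty_iff_ne_empty]
    intro h
    have hsub : Y₀ ⊆ X₀ := sdiff_eq_empty_iff_subset.1 h
    have h1 : (X₀ \ Y₀).sum id + Y₀.sum id = X₀.sum id := Finset.sum_sdiff hsub
    have h2 : (X₀ \ Y₀).sum id = 0 := by linarith [h1, hsum]
    have hpos' : 0 < (X₀ \ Y₀).sum id := by
      apply Finset.sum_pos
      · intro x hx
        exact hpos x (hX₀ (mem_sdiff.1 hx).1)
      · exact ⟨t, mem_sdiff.2 ⟨htX, htY⟩⟩
    linarith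
  · -- equal sums
    have h1 : (X₀ \ (X₀ ∩ Y₀)).sum id + (X₀ ∩ Y₀).sum id = X₀.sum id :=
      Finset.sum_sdiff inter_subset_left
    have h2 : (Y₀ \ (X₀ ∩ Y₀)).sum id + (X₀ ∩ Y₀).sum id = Y₀.sum id :=
      Finset.sum_sdiff (Finset.inter_subset_right : X₀ ∩ Y₀ ⊆ Y₀)
    have e1 : X₀ \ (X₀ ∩ Y₀) = X₀ \ Y₀ := by
      ext x; simp only [mem_sdiff, mem_inter]; tauto
    have e2 : Y₀ \ (X₀ ∩ Y₀) = Y₀ \ X₀ := by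
      ext x; simp only [mem_sdiff, mem_inter]; tauto
    rw [e1] at h1; rw [e2] at h2
    linarith
  · exact ⟨t, mem_inter.2 ⟨mem_union_left _ (mem_sdiff.2 ⟨htX, htY⟩), ht⟩⟩

/-- **Lemma 4.5 (existence part).** Let `I` be a finite set of `n` positive reals, each an
integer multiple of `β > 0`. Let `T` be the `τ` largest elements (`1 ≤ τ ≤ n`) and
`B := I \ T`. If `|𝒮(B)| > n·max(I)/(β·2^τ) + 1`, then there exist nonempty disjoint
`X, Y ⊆ I` with `Σ(X) = Σ(Y)` and `(X ∪ Y) ∩ T ≠ ∅`. -/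
theorem pigeonhole_with_top_item (β : ℝ) (hβ : 0 < β) (n τ : ℕ) (hτ1 : 1 ≤ τ) (hτn : τ ≤ n)
    (I : Finset ℝ) (hcard : I.card = n) (hpos : ∀ x ∈ I, 0 < x)
    (hmult : ∀ x ∈ I, ∃ k : ℤ, x = k * β)
    (T : Finset ℝ) (hT : T ⊆ I) (hTcard : T.card = τ)
    (hTtop : ∀ t ∈ T, ∀ b ∈ I \ T, b ≤ t)
    (hS : ((Finset.image (fun X => X.sum id) (I \ T).powerset).card : ℝ) >
      n * I.max' (by rw [← Finset.card_pos, hcard]; omega) / (β * 2 ^ τ) + 1) :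
    ∃ X Y : Finset ℝ, X ⊆ I ∧ Y ⊆ I ∧ Disjoint X Y ∧ X.Nonempty ∧ Y.Nonempty ∧
      X.sum id = Y.sum id ∧ ((X ∪ Y) ∩ T).Nonempty := by
  classical
  have hIne : I.Nonempty := by rw [← Finset.card_pos, hcard]; omega
  set M : ℝ := I.max' hIne with hM
  have hMpos : 0 < M := hpos _ (I.max'_mem hIne)
  set B : Finset ℝ := I \ T with hB
  set S : Finset ℝ := Finset.image (fun X => X.sum id) B.powerset with hSdef
  -- every subset of I has sum = k*β with 0 ≤ k and sum ≤ n*M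
  have key : ∀ A : Finset ℝ, A ⊆ I → ∃ k : ℤ, (k : ℝ) * β = A.sum id ∧
      0 ≤ k ∧ (k : ℝ) ≤ n * M / β := by
    intro A hA
    have g : ∀ x ∈ A, ∃ k : ℤ, x = k * β := fun x hx => hmult x (hA hx)
    choose f hf using g
    set k : ℤ := ∑ x ∈ A.attach, f x.1 x.2 with hk
    have heq : (k : ℝ) * β = A.sum id := by
      rw [← Finset.sum_attach A id, hk]
      push_cast
      rw [Finset.sum_mul]
      exact (Finset.sum_congr rfl fun x _ => (hf x.1 x.2)).symm
    have hsum0 : (0:ℝ) ≤ A.sum id := Finset.sum_nonneg fun x hx => (hpos x (hA hx)).le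
    have hsumle : A.sum id ≤ n * M := by
      have h1 : A.sum id ≤ I.sum id := by
        apply Finset.sum_le_sum_of_subset_of_nonneg hA
        intro x hx _; exact (hpos x hx).le
      have h2 : I.sum id ≤ I.card • M :=
        Finset.sum_le_card_nsmul I id M fun x hx => I.le_max' x hx
      rw [hcard, nsmul_eq_mul] at h2
      linarith
    have hk0 : 0 ≤ k := by
      by_contra h
      push_neg at h
      have hkr : (k : ℝ) < 0 := by exact_mod_cast h
      nlinarith
    refine ⟨k, heq, hk0, ?_⟩
    rw [le_div_iff₀ hβ]
    linarith
  -- pigeonhole setup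
  set K : ℤ := ⌊(n : ℝ) * M / β⌋ with hK
  have hK0 : 0 ≤ K := by
    apply Int.floor_nonneg.2
    positivity
  set C : Finset ℝ := (Finset.Icc (0:ℤ) K).image (fun k : ℤ => (k : ℝ) * β) with hC
  set D : Finset (ℝ × Finset ℝ) := S ×ˢ T.powerset with hD
  have hmaps : ∀ p ∈ D, p.1 + p.2.sum id ∈ C := by
    rintro ⟨s, T'⟩ hp
    rw [hD, Finset.mem_product] at hp
    obtain ⟨hs, hT'⟩ := hp
    rw [hSdef, Finset.mem_image] at hs
    obtain ⟨B₁, hB₁, hB₁s⟩ := hs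
    rw [Finset.mem_powerset] at hB₁ hT'
    have hdisj : Disjoint B₁ T' := by
      apply Finset.disjoint_left.2
      intro x hx hxT'
      exact (Finset.mem_sdiff.1 (hB₁ hx)).2 (hT' hxT')
    have hsub : B₁ ∪ T' ⊆ I :=
      Finset.union_subset (hB₁.trans sdiff_subset) (hT'.trans hT)
    obtain ⟨k, hk1, hk2, hk3⟩ := key (B₁ ∪ T') hsub
    rw [Finset.sum_union hdisj, hB₁s] at hk1
    rw [hC, Finset.mem_image]
    refine ⟨k, ?_, hk1⟩
    rw [Finset.mem_Icc]
    exact ⟨hk2, Int.le_floor.2 hk3⟩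
  have hCcard : (C.card : ℝ) ≤ (n : ℝ) * M / β + 1 := by
    have h1 : C.card ≤ (Finset.Icc (0:ℤ) K).card := Finset.card_image_le
    have h2 : (Finset.Icc (0:ℤ) K).card = (K + 1).toNat := by
      rw [Int.card_Icc]; congr 1; omega
    have h3 : ((K + 1).toNat : ℝ) = (K : ℝ) + 1 := by
      have : ((K + 1).toNat : ℤ) = K + 1 := Int.toNat_of_nonneg (by omega)
      exact_mod_cast this
    have h4 : (K : ℝ) ≤ (n : ℝ) * M / β := Int.floor_le _
    calc (C.card : ℝ) ≤ ((K + 1).toNat : ℝ) := by exact_mod_cast h1.trans h2.le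
      _ = (K : ℝ) + 1 := h3
      _ ≤ (n : ℝ) * M / β + 1 := by linarith
  have hDcard : (D.card : ℝ) = (S.card : ℝ) * 2 ^ τ := by
    rw [hD, Finset.card_product, Finset.card_powerset, hTcard]
    push_cast; ring
  have hlt : C.card < D.card := by
    have h2 : (0:ℝ) < 2 ^ τ := by positivity
    have hstep : ((n : ℝ) * M / (β * 2 ^ τ) + 1) * 2 ^ τ = (n : ℝ) * M / β + 2 ^ τ := by
      field_simp
    have h2τ : (2:ℝ) ≤ 2 ^ τ := by
      calc (2:ℝ) = 2 ^ 1 := (pow_one 2).symm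
        _ ≤ 2 ^ τ := pow_le_pow_right₀ one_le_two hτ1
    have : (C.card : ℝ) < (D.card : ℝ) := by
      rw [hDcard]
      calc (C.card : ℝ) ≤ (n : ℝ) * M / β + 1 := hCcard
        _ < ((n : ℝ) * M / (β * 2 ^ τ) + 1) * 2 ^ τ := by rw [hstep]; linarith
        _ ≤ (S.card : ℝ) * 2 ^ τ := by
            apply mul_le_mul_of_nonneg_right (le_of_lt hS) h2.le
    exact_mod_cast this
  obtain ⟨p, hp, q, hq, hpq, hfpq⟩ :=
    Finset.exists_ne_map_eq_of_card_lt_of_maps_to hlt hmaps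
  -- extract data
  rw [hD, Finset.mem_product] at hp hq
  obtain ⟨hps, hpT⟩ := hp
  obtain ⟨hqs, hqT⟩ := hq
  rw [hSdef, Finset.mem_image] at hps hqs
  obtain ⟨B₁, hB₁, hB₁s⟩ := hps
  obtain ⟨B₂, hB₂, hB₂s⟩ := hqs
  rw [Finset.mem_powerset] at hB₁ hB₂ hpT hqT
  have hT2ne : p.2 ≠ q.2 := by
    intro h
    apply hpq
    have h1 : p.1 = q.1 := by
      have := hfpq
      rw [h] at this
      linarith
    exact Prod.ext h1 h
  -- X₀, Y₀
  have hdisj1 : Disjoint B₁ p.2 := Finset.disjoint_left.2 fun x hx hx2 =>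
    (Finset.mem_sdiff.1 (hB₁ hx)).2 (hpT hx2)
  have hdisj2 : Disjoint B₂ q.2 := Finset.disjoint_left.2 fun x hx hx2 =>
    (Finset.mem_sdiff.1 (hB₂ hx)).2 (hqT hx2)
  have hX₀ : B₁ ∪ p.2 ⊆ I := Finset.union_subset (hB₁.trans sdiff_subset) (hpT.trans hT)
  have hY₀ : B₂ ∪ q.2 ⊆ I := Finset.union_subset (hB₂.trans sdiff_subset) (hqT.trans hT)
  have hsum : (B₁ ∪ p.2).sum id = (B₂ ∪ q.2).sum id := by
    rw [Finset.sum_union hdisj1, Finset.sum_union hdisj2, hB₁s, hB₂s]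
    exact hfpq
  by_cases hc : (p.2 \ q.2).Nonempty
  · obtain ⟨t, ht⟩ := hc
    rw [Finset.mem_sdiff] at ht
    refine aux_pair I T hpos (B₁ ∪ p.2) (B₂ ∪ q.2) hX₀ hY₀ hsum t (hpT ht.1)
      (Finset.mem_union_right _ ht.1) ?_
    intro h
    rcases Finset.mem_union.1 h with h' | h'
    · exact (Finset.mem_sdiff.1 (hB₂ h')).2 (hpT ht.1)
    · exact ht.2 h'
  · have hc2 : (q.2 \ p.2).Nonempty := by
      rw [Finset.not_nonempty_iff_eq_empty, Finset.sdiff_eq_empty_iff_subset] at hc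
      rw [Finset.nonempty_iff_ne_empty]
      intro h
      rw [Finset.sdiff_eq_empty_iff_subset] at h
      exact hT2ne (Finset.Subset.antisymm hc h)
    obtain ⟨t, ht⟩ := hc2
    rw [Finset.mem_sdiff] at ht
    obtain ⟨X, Y, h1, h2, h3, h4, h5, h6, h7⟩ :=
      aux_pair I T hpos (B₂ ∪ q.2) (B₁ ∪ p.2) hY₀ hX₀ hsum.symm t (hqT ht.1)
        (Finset.mem_union_right _ ht.1)
        (by
          intro h
          rcases Finset.mem_union.1 h with h' | h'
          · exact (Finset.mem_sdiff.1 (hB₁ h')).2 (hqT ht.1)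
          · exact ht.2 h')
    exact ⟨X, Y, h1, h2, h3, h4, h5, h6, h7⟩
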